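/- Let A, A_k be real n×n matrices, B₁ a real n×m matrix, B₂ a real n×r matrix, B_k a real n×m matrix, C₁, C₂ real m×n matrices, C_k a real r×n matrix, and D₂₁ a real m×m matrix. Set R = C₁·B₁ + B₁ᵀ·C₁ᵀ and assume R is invertible. Define the closed-loop matrices A_c = [[A, B₂·C_k],[B_k·C₂, A_k]], B_c = [B₁; B_k·D₂₁], C_c = [C₁, 0]. Suppose the real symmetric 2n×2n matrix Σ = [[Σ₁₁, Σ₁₂],[Σ₁₂ᵀ, Σ₂₂]] (blocks n×n) is positive definite and satisfies Σ·A_c + A_cᵀ·Σ + (B_cᵀ·Σ − C_c·A_c)ᵀ·R⁻¹·(B_cᵀ·Σ − C_c·A_c) = 0. Define Ẽ = −Σ₂₂⁻¹·Σ₁₂ᵀ, F = C_k·Ẽ, and P = Σ₁₁ − Σ₁₂·Σ₂₂⁻¹·Σ₁₂ᵀ. Then P is symmetric positive definite and satisfies P·(A + B₂·F) + (A + B₂·F)ᵀ·P + Q̃ᵀ·R⁻¹·Q̃ = 0, where Q̃ = C₁·(A + B₂·F) − B₁ᵀ·P. -/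

import Mathlib

open Matrix

private lemma posdef_congr {α β : Type*} [Fintype α] [Fintype β]
    {M : Matrix α α ℝ} (hM : M.PosDef) (W : Matrix α β ℝ)
    (hW : ∀ x : β → ℝ, x ≠ 0 → W *ᵥ x ≠ 0) : (Wᵀ * M * W).PosDef := by
  refine Matrix.PosDef.of_dotProduct_mulVec_pos ?_ ?_
  · have h := Matrix.isHermitian_conjTranspose_mul_mul W hM.1
    simpa [Matrix.conjTranspose_eq_transpose_of_trivial] using h
  · intro x hx
    have h := hM.dotProduct_mulVec_pos (x := W *ᵥ x) (hW x hx)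
    simpa [← Matrix.mulVec_mulVec, Matrix.dotProduct_mulVec, Matrix.vecMul_transpose] using h

/-- First half of the necessity part of the NI output feedback synthesis
theorem: from a positive definite solution `Σ` of the closed-loop NI ARE, the Schur
complement `P = S₁₁ − S₁₂S₂₂⁻¹S₁₂ᵀ` is positive definite and solves the state-feedback
Riccati equation with gain `F = C_k·Ẽ`, `Ẽ = −S₂₂⁻¹S₁₂ᵀ`. -/
theorem stmt_10 {n m r : ℕ}
    (A Ak : Matrix (Fin n) (Fin n) ℝ)
    (B₁ Bk : Matrix (Fin n) (Fin m) ℝ) (B₂ : Matrix (Fin n) (Fin r) ℝ)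
    (C₁ C₂ : Matrix (Fin m) (Fin n) ℝ) (Ck : Matrix (Fin r) (Fin n) ℝ)
    (D₂₁ : Matrix (Fin m) (Fin m) ℝ)
    (R : Matrix (Fin m) (Fin m) ℝ) (hR : R = C₁ * B₁ + B₁ᵀ * C₁ᵀ) (hRu : IsUnit R.det)
    (Ac : Matrix (Fin n ⊕ Fin n) (Fin n ⊕ Fin n) ℝ)
    (hAc : Ac = fromBlocks A (B₂ * Ck) (Bk * C₂) Ak)
    (Bc : Matrix (Fin n ⊕ Fin n) (Fin m) ℝ) (hBc : Bc = fromRows B₁ (Bk * D₂₁))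
    (Cc : Matrix (Fin m) (Fin n ⊕ Fin n) ℝ) (hCc : Cc = fromCols C₁ 0)
    (S₁₁ S₁₂ S₂₂ : Matrix (Fin n) (Fin n) ℝ)
    (Sg : Matrix (Fin n ⊕ Fin n) (Fin n ⊕ Fin n) ℝ)
    (hSg : Sg = fromBlocks S₁₁ S₁₂ S₁₂ᵀ S₂₂) (hSgpd : Sg.PosDef)
    (hric : Sg * Ac + Acᵀ * Sg + (Bcᵀ * Sg - Cc * Ac)ᵀ * R⁻¹ * (Bcᵀ * Sg - Cc * Ac) = 0)
    (Et : Matrix (Fin n) (Fin n) ℝ) (hEt : Et = -(S₂₂⁻¹ * S₁₂ᵀ))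
    (F : Matrix (Fin r) (Fin n) ℝ) (hF : F = Ck * Et)
    (P : Matrix (Fin n) (Fin n) ℝ) (hP : P = S₁₁ - S₁₂ * S₂₂⁻¹ * S₁₂ᵀ) :
    P.PosDef ∧
    P * (A + B₂ * F) + (A + B₂ * F)ᵀ * P +
      (C₁ * (A + B₂ * F) - B₁ᵀ * P)ᵀ * R⁻¹ * (C₁ * (A + B₂ * F) - B₁ᵀ * P) = 0 := by
  -- symmetry of blocks from the hermiticity of Sg
  have hSgsymm : Sgᵀ = Sg := by
    have := hSgpd.1
    simpa [Matrix.IsHermitian, Matrix.conjTranspose_eq_transpose_of_trivial] using this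
  have hblocks : fromBlocks S₁₁ᵀ S₁₂ S₁₂ᵀ S₂₂ᵀ = fromBlocks S₁₁ S₁₂ S₁₂ᵀ S₂₂ := by
    have h := hSgsymm
    rw [hSg, Matrix.fromBlocks_transpose, Matrix.transpose_transpose] at h
    exact h
  have hS₂₂symm : S₂₂ᵀ = S₂₂ := by
    have := congrArg Matrix.toBlocks₂₂ hblocks
    simpa [Matrix.toBlocks_fromBlocks₂₂] using this
  have hS₁₁symm : S₁₁ᵀ = S₁₁ := by
    have := congrArg Matrix.toBlocks₁₁ hblocks
    simpa [Matrix.toBlocks_fromBlocks₁₁] using this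
  -- S₂₂ is positive definite
  have hS₂₂pd : S₂₂.PosDef := by
    have h0 : ((fromRows (0 : Matrix (Fin n) (Fin n) ℝ) (1 : Matrix (Fin n) (Fin n) ℝ))ᵀ * Sg *
        (fromRows (0 : Matrix (Fin n) (Fin n) ℝ) (1 : Matrix (Fin n) (Fin n) ℝ))) = S₂₂ := by
      rw [hSg, Matrix.transpose_fromRows, Matrix.fromCols_mul_fromBlocks,
        Matrix.fromCols_mul_fromRows]
      simp
    rw [← h0]
    refine posdef_congr hSgpd _ (fun x hx h => hx ?_)
    rw [Matrix.fromRows_mulVec] at h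
    have := congrFun h
    funext i
    simpa using this (Sum.inr i)
  have hS₂₂inv : S₂₂ * S₂₂⁻¹ = 1 :=
    Matrix.mul_nonsing_inv S₂₂ (isUnit_iff_ne_zero.mpr hS₂₂pd.det_pos.ne')
  have hS₂₂inv' : S₂₂⁻¹ * S₂₂ = 1 :=
    Matrix.nonsing_inv_mul S₂₂ (isUnit_iff_ne_zero.mpr hS₂₂pd.det_pos.ne')
  have hS₂₂invsymm : (S₂₂⁻¹)ᵀ = S₂₂⁻¹ := by
    rw [Matrix.transpose_nonsing_inv, hS₂₂symm]
  have hS₂₂Et : S₂₂ * Et = -S₁₂ᵀ := by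
    rw [hEt, Matrix.mul_neg, ← Matrix.mul_assoc, hS₂₂inv, Matrix.one_mul]
  have hEtT : Etᵀ = -(S₁₂ * S₂₂⁻¹) := by
    rw [hEt]
    simp [Matrix.transpose_mul, hS₂₂invsymm]
  have hPsymm : Pᵀ = P := by
    rw [hP]
    simp [Matrix.transpose_sub, Matrix.transpose_mul, hS₁₁symm, hS₂₂invsymm, Matrix.mul_assoc]
  -- the key congruence matrix
  set W : Matrix (Fin n ⊕ Fin n) (Fin n) ℝ := fromRows 1 Et with hW
  have hWS : Wᵀ * Sg = fromCols P 0 := by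
    rw [hW, hSg, Matrix.transpose_fromRows, Matrix.fromCols_mul_fromBlocks, hEtT, hP]
    simp [Matrix.neg_mul, Matrix.mul_assoc, hS₂₂inv', sub_eq_add_neg]
  have hSW : Sg * W = fromRows P 0 := by
    have : (Wᵀ * Sg)ᵀ = Sg * W := by
      rw [Matrix.transpose_mul, Matrix.transpose_transpose, hSgsymm]
    rw [← this, hWS, Matrix.transpose_fromCols, hPsymm]
    simp
  -- P is positive definite
  have hPSgW : Wᵀ * Sg * W = P := by
    rw [hWS, hW, Matrix.fromCols_mul_fromRows]
    simp
  have hPpd : P.PosDef := by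
    rw [← hPSgW]
    refine posdef_congr hSgpd _ (fun x hx h => hx ?_)
    rw [hW, Matrix.fromRows_mulVec] at h
    have := congrFun h
    funext i
    simpa using this (Sum.inl i)
  refine ⟨hPpd, ?_⟩
  -- closed-loop state matrix times W
  set Acl : Matrix (Fin n) (Fin n) ℝ := A + B₂ * F with hAcl
  have hAcW : Ac * W = fromRows Acl (Bk * C₂ + Ak * Et) := by
    rw [hW, hAc, Matrix.fromBlocks_mul_fromRows, hAcl, hF]
    simp [Matrix.mul_assoc]
  set Qt : Matrix (Fin m) (Fin n) ℝ := C₁ * Acl - B₁ᵀ * P with hQt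
  -- the three transformed terms
  have h1 : Wᵀ * (Sg * Ac) * W = P * Acl := by
    rw [← Matrix.mul_assoc, hWS, Matrix.mul_assoc, hAcW, Matrix.fromCols_mul_fromRows]
    simp
  have h2 : Wᵀ * (Acᵀ * Sg) * W = Aclᵀ * P := by
    rw [Matrix.mul_assoc, Matrix.mul_assoc Acᵀ Sg W, hSW, ← Matrix.mul_assoc,
      ← Matrix.transpose_mul, hAcW, Matrix.transpose_fromRows,
      Matrix.fromCols_mul_fromRows]
    simp
  have h3 : (Bcᵀ * Sg - Cc * Ac) * W = -Qt := by
    rw [Matrix.sub_mul, Matrix.mul_assoc, hSW, Matrix.mul_assoc, hAcW, hBc, hCc,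
      Matrix.transpose_fromRows, Matrix.fromCols_mul_fromRows,
      Matrix.fromCols_mul_fromRows, hQt]
    simp
  have h4 : Wᵀ * ((Bcᵀ * Sg - Cc * Ac)ᵀ * R⁻¹ * (Bcᵀ * Sg - Cc * Ac)) * W
      = Qtᵀ * R⁻¹ * Qt := by
    rw [Matrix.mul_assoc (Wᵀ), Matrix.mul_assoc _ _ W, h3, ← Matrix.mul_assoc,
      ← Matrix.mul_assoc, ← Matrix.transpose_mul, h3]
    simp [Matrix.mul_assoc]
  have key : Wᵀ * (Sg * Ac + Acᵀ * Sg +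
      (Bcᵀ * Sg - Cc * Ac)ᵀ * R⁻¹ * (Bcᵀ * Sg - Cc * Ac)) * W = 0 := by
    rw [hric]
    simp
  rw [Matrix.mul_add, Matrix.mul_add, Matrix.add_mul, Matrix.add_mul, h1, h2, h4] at key
  exact key
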